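/- For every x ∈ ℝ^n with x ≥ 0, the robust constraint Σ_{j∈J} ā_{ij} x_j + DEV_i(x) ≤ b_i holds if and only if there exist v, w ∈ ℝ^K_{≥0} and z ∈ ℝ^J_{≥0} such that −v_k + w_k + z_j ≥ d^k_{ij} x_j for all j ∈ J, k ∈ K, and Σ_{j∈J} ā_{ij} x_j − Σ_{k∈K} l_k v_k + Σ_{k∈K} u_k w_k + Σ_{j∈J} z_j ≤ b_i. Consequently, the robust counterpart of the linear program under the multi-band uncertainty set is equivalent to the compact linear program (RLP). -/

import Mathlib

open Finset

noncomputable def bands (Km Kp : ℤ) : Finset ℤ := Finset.Icc Km Kp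

def memY (n : ℕ) (Km Kp : ℤ) (l u : ℤ → ℕ) (y : Fin n → ℤ → ℕ) : Prop :=
  (∀ j : Fin n, ∀ k ∈ bands Km Kp, y j k ≤ 1) ∧
  (∀ k ∈ bands Km Kp, l k ≤ ∑ j : Fin n, y j k ∧ ∑ j : Fin n, y j k ≤ u k) ∧
  (∀ j : Fin n, ∑ k ∈ bands Km Kp, y j k ≤ 1)

noncomputable def DEV (n : ℕ) (Km Kp : ℤ) (l u : ℤ → ℕ) (d : Fin n → ℤ → ℝ)
    (x : Fin n → ℝ) : ℝ :=
  sSup {v | ∃ y : Fin n → ℤ → ℕ, memY n Km Kp l u y ∧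
    v = ∑ j : Fin n, ∑ k ∈ bands Km Kp, d j k * x j * (y j k : ℝ)}

noncomputable def zD (n : ℕ) (B : Finset ℤ) (hB : B.Nonempty) (c : Fin n → ℤ → ℝ)
    (g : ℤ → ℝ) (j : Fin n) : ℝ := max 0 (B.sup' hB fun k => c j k - g k)

noncomputable def FD (n : ℕ) (B : Finset ℤ) (hB : B.Nonempty) (c : Fin n → ℤ → ℝ)
    (l u : ℤ → ℕ) (g : ℤ → ℝ) : ℝ :=
  (∑ k ∈ B, ((u k : ℝ) * max (g k) 0 + (l k : ℝ) * min (g k) 0)) + ∑ j, zD n B hB c g j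

lemma zD_nonneg {n B hB c g} {j : Fin n} : 0 ≤ zD n B hB c g j := le_max_left _ _

lemma zD_ge {n B hB c g} {j : Fin n} {k : ℤ} (hk : k ∈ B) : c j k - g k ≤ zD n B hB c g j :=
  le_trans (Finset.le_sup' (fun k => c j k - g k) hk) (le_max_right _ _)


variable {n : ℕ}

lemma flow_feasible (B : Finset ℤ) (L U : ℤ → ℕ) (N : Fin n → Finset ℤ) (P : Fin n → Prop)
    [DecidablePred P]
    (hNB : ∀ j, N j ⊆ B)
    (hLU : ∀ k ∈ B, L k ≤ U k)
    (hA : ∀ S ⊆ B, ∑ k ∈ S, L k ≤ (univ.filter fun j => ((N j) ∩ S).Nonempty).card)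
    (hB2 : ∀ S ⊆ B, (univ.filter fun j => P j ∧ N j ⊆ S).card ≤ ∑ k ∈ S, U k) :
    ∃ σ : Fin n → Option ℤ, (∀ j k, σ j = some k → k ∈ N j) ∧ (∀ j, P j → σ j ≠ none) ∧
      ∀ k ∈ B, L k ≤ (univ.filter fun j => σ j = some k).card ∧
        (univ.filter fun j => σ j = some k).card ≤ U k := by
  classical
  set D := ∑ k ∈ B, U k with hD
  -- slots
  set slots : ℤ → Finset (ℤ × ℕ) := fun k => ({k} : Finset ℤ) ×ˢ Finset.range (U k) with hslots
  set opt : ℤ → Finset (ℤ × ℕ) := fun k => ({k} : Finset ℤ) ×ˢ Finset.Ico (L k) (U k) with hopt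
  have card_slots : ∀ k, (slots k).card = U k := by
    intro k; simp [hslots]
  have card_opt : ∀ k, (opt k).card = U k - L k := by
    intro k; simp [hopt]
  have opt_sub : ∀ k, opt k ⊆ slots k := by
    intro k p hp
    simp only [hopt, hslots, Finset.mem_product, Finset.mem_singleton, Finset.mem_Ico,
      Finset.mem_range] at hp ⊢
    exact ⟨hp.1, hp.2.2⟩
  have slots_disj : ∀ k ∈ B, ∀ k' ∈ B, k ≠ k' → Disjoint (slots k) (slots k') := by
    intro k _ k' _ hkk'
    rw [Finset.disjoint_left]
    intro p hp hp'
    simp only [hslots, Finset.mem_product, Finset.mem_singleton] at hp hp'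
    exact hkk' (hp.1.symm.trans hp'.1)
  have card_biUnion_slots : ∀ S : Finset ℤ, S ⊆ B → (S.biUnion slots).card = ∑ k ∈ S, U k := by
    intro S hS
    rw [Finset.card_biUnion (fun k hk k' hk' h => slots_disj k (hS hk) k' (hS hk') h)]
    exact Finset.sum_congr rfl fun k _ => card_slots k
  -- the bipartite sets
  let ι := (Fin n) ⊕ (Fin D)
  let α := (ℤ × ℕ) ⊕ (Fin n)
  let SL : Finset (ℤ × ℕ) → Finset α := fun s => s.image Sum.inl
  have card_SL : ∀ s, (SL s).card = s.card := fun s => Finset.card_image_of_injective _ Sum.inl_injective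
  have SL_mono : ∀ {s s' : Finset (ℤ × ℕ)}, s ⊆ s' → SL s ⊆ SL s' :=
    fun h => Finset.image_subset_image h
  let DS : Finset α := Finset.univ.image (Sum.inr : Fin n → α)
  have card_DS : DS.card = n := by
    rw [Finset.card_image_of_injective _ Sum.inr_injective]; simp
  have SL_DS_disj : ∀ s, Disjoint (SL s) DS := by
    intro s
    rw [Finset.disjoint_left]
    rintro x hx hx'
    simp only [SL, DS, Finset.mem_image] at hx hx'
    obtain ⟨p, -, rfl⟩ := hx
    obtain ⟨q, -, h⟩ := hx'
    exact absurd h (by simp)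
  let t : ι → Finset α := fun i =>
    match i with
    | Sum.inl j => SL ((N j).biUnion slots) ∪ (if P j then ∅ else DS)
    | Sum.inr _ => SL (B.biUnion opt) ∪ DS
  -- Hall condition
  have hall : ∀ s : Finset ι, s.card ≤ (s.biUnion t).card := by
    intro s
    set sR := s.toLeft with hsR
    set sD := s.toRight with hsD
    have hcard : s.card = sR.card + sD.card := by
      rw [hsR, hsD, Finset.card_toLeft_add_card_toRight]
    set NS := sR.biUnion N with hNS
    have hNSB : NS ⊆ B := by
      intro k hk
      rw [hNS, Finset.mem_biUnion] at hk
      obtain ⟨j, -, hj⟩ := hk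
      exact hNB j hj
    have memL : ∀ j ∈ sR, Sum.inl j ∈ s := fun j hj => Finset.mem_toLeft.mp hj
    have memR : ∀ i ∈ sD, Sum.inr i ∈ s := fun i hi => Finset.mem_toRight.mp hi
    have hsubNS : SL (NS.biUnion slots) ⊆ s.biUnion t := by
      intro x hx
      simp only [SL, Finset.mem_image] at hx
      obtain ⟨p, hp, rfl⟩ := hx
      rw [Finset.mem_biUnion] at hp
      obtain ⟨k, hk, hpk⟩ := hp
      rw [hNS, Finset.mem_biUnion] at hk
      obtain ⟨j, hj, hkj⟩ := hk
      refine Finset.mem_biUnion.mpr ⟨Sum.inl j, memL j hj, ?_⟩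
      exact Finset.mem_union_left _ (Finset.mem_image_of_mem _
        (Finset.mem_biUnion.mpr ⟨k, hkj, hpk⟩))
    by_cases hsDe : sD.Nonempty
    · -- Case C
      obtain ⟨i₀, hi₀⟩ := hsDe
      have hcov : DS ∪ SL (B.biUnion fun k => if k ∈ NS then slots k else opt k) ⊆
          s.biUnion t := by
        intro x hx
        rcases Finset.mem_union.mp hx with hx | hx
        · exact Finset.mem_biUnion.mpr ⟨Sum.inr i₀, memR i₀ hi₀,
            Finset.mem_union_right _ hx⟩
        · simp only [SL, Finset.mem_image] at hx
          obtain ⟨p, hp, rfl⟩ := hx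
          rw [Finset.mem_biUnion] at hp
          obtain ⟨k, hk, hpk⟩ := hp
          by_cases hkNS : k ∈ NS
          · rw [if_pos hkNS] at hpk
            rw [hNS, Finset.mem_biUnion] at hkNS
            obtain ⟨j, hj, hkj⟩ := hkNS
            exact Finset.mem_biUnion.mpr ⟨Sum.inl j, memL j hj,
              Finset.mem_union_left _ (Finset.mem_image_of_mem _
                (Finset.mem_biUnion.mpr ⟨k, hkj, hpk⟩))⟩
          · rw [if_neg hkNS] at hpk
            exact Finset.mem_biUnion.mpr ⟨Sum.inr i₀, memR i₀ hi₀,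
              Finset.mem_union_left _ (Finset.mem_image_of_mem _
                (Finset.mem_biUnion.mpr ⟨k, hk, hpk⟩))⟩
      have hcovcard : (DS ∪ SL (B.biUnion fun k => if k ∈ NS then slots k else opt k)).card
          = n + ∑ k ∈ B, (if k ∈ NS then U k else U k - L k) := by
        rw [Finset.card_union_of_disjoint (Finset.disjoint_right.mpr fun x hx hx' =>
          (Finset.disjoint_left.mp (SL_DS_disj _) hx) hx'), card_DS, card_SL]
        congr 1
        rw [Finset.card_biUnion]
        · exact Finset.sum_congr rfl fun k hk => by
            by_cases hkNS : k ∈ NS <;> simp [hkNS, card_slots, card_opt]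
        · intro k hk k' hk' hkk'
          have := slots_disj k hk k' hk' hkk'
          refine Finset.disjoint_of_subset_left ?_ (Finset.disjoint_of_subset_right ?_ this) <;>
            (beta_reduce; split <;> first | rfl | exact opt_sub _)
      -- key counting inequality
      have key : sR.card + ∑ k ∈ B \ NS, L k ≤ n := by
        have h1 := hA (B \ NS) (Finset.sdiff_subset)
        have h2 : (univ.filter fun j => ((N j) ∩ (B \ NS)).Nonempty) ⊆
            univ.filter fun j => j ∉ sR := by
          intro j hj
          simp only [Finset.mem_filter, Finset.mem_univ, true_and] at hj ⊢
          intro hjsR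
          obtain ⟨k, hk⟩ := hj
          rw [Finset.mem_inter, Finset.mem_sdiff] at hk
          exact hk.2.2 (Finset.mem_biUnion.mpr ⟨j, hjsR, hk.1⟩)
        have h3 : (univ.filter fun j => j ∉ sR).card = n - sR.card := by
          rw [Finset.filter_not, Finset.card_sdiff_of_subset (by simp [Finset.subset_univ])]
          simp
        have h4 := le_trans h1 (le_trans (Finset.card_le_card h2) (le_of_eq h3))
        have h5 : sR.card ≤ n := by
          have := Finset.card_le_card (Finset.subset_univ sR); simpa using this
        omega
      have hsplit : ∑ k ∈ B, (if k ∈ NS then U k else U k - L k) + ∑ k ∈ B \ NS, L k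
          = ∑ k ∈ NS, U k + ∑ k ∈ B \ NS, U k := by
        rw [← Finset.sum_filter_add_sum_filter_not B (· ∈ NS)]
        have e1 : B.filter (· ∈ NS) = NS := by
          rw [Finset.filter_mem_eq_inter, Finset.inter_eq_right.mpr hNSB]
        have e2 : B.filter (fun k => ¬ k ∈ NS) = B \ NS := (Finset.sdiff_eq_filter B NS).symm
        rw [e1, e2, add_assoc, ← Finset.sum_add_distrib]
        refine congrArg₂ (· + ·) (Finset.sum_congr rfl fun k hk => by rw [if_pos hk])
          (Finset.sum_congr rfl fun k hk => ?_)
        have := hLU k (Finset.mem_sdiff.mp hk).1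
        have hkNS : k ∉ NS := (Finset.mem_sdiff.mp hk).2
        rw [if_neg hkNS]
        omega
      have hDle : sD.card ≤ D := by
        have := Finset.card_le_card (Finset.subset_univ sD); simpa [hD] using this
      have e3 : ∑ k ∈ B \ NS, U k + ∑ k ∈ NS, U k = ∑ k ∈ B, U k :=
        Finset.sum_sdiff hNSB
      have hfin := le_trans (Finset.card_le_card hcov) (Finset.card_le_card (Finset.Subset.refl _))
      have hle := Finset.card_le_card hcov
      rw [hcovcard] at hle
      omega
    · -- sD empty
      have hsD0 : sD.card = 0 := by
        rw [Finset.not_nonempty_iff_eq_empty] at hsDe; rw [hsDe]; simp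
      by_cases hallP : ∀ j ∈ sR, P j
      · -- Case A
        have h1 : sR ⊆ univ.filter fun j => P j ∧ N j ⊆ NS := by
          intro j hj
          simp only [Finset.mem_filter, Finset.mem_univ, true_and]
          exact ⟨hallP j hj, fun k hk => Finset.mem_biUnion.mpr ⟨j, hj, hk⟩⟩
        have h2 := le_trans (Finset.card_le_card h1) (hB2 NS hNSB)
        have h3 : ∑ k ∈ NS, U k = (SL (NS.biUnion slots)).card := by
          rw [card_SL, card_biUnion_slots NS hNSB]
        have h4 := Finset.card_le_card hsubNS
        omega
      · -- Case B
        push_neg at hallP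
        obtain ⟨j₀, hj₀, hPj₀⟩ := hallP
        have hDSsub : DS ⊆ s.biUnion t := by
          intro x hx
          refine Finset.mem_biUnion.mpr ⟨Sum.inl j₀, memL j₀ hj₀, ?_⟩
          show x ∈ SL ((N j₀).biUnion slots) ∪ (if P j₀ then ∅ else DS)
          rw [if_neg hPj₀]
          exact Finset.mem_union_right _ hx
        have h1 := Finset.card_le_card hDSsub
        have h2 : sR.card ≤ n := by
          have := Finset.card_le_card (Finset.subset_univ sR); simpa using this
        omega
  -- apply Hall
  obtain ⟨f, hfinj, hft⟩ := (Finset.all_card_le_biUnion_card_iff_exists_injective t).mp hall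
  -- the full target set
  set Tall : Finset α := SL (B.biUnion slots) ∪ DS with hTall
  have hTsub : ∀ i, t i ⊆ Tall := by
    intro i x hx
    match i with
    | Sum.inl j =>
      rcases Finset.mem_union.mp hx with hx | hx
      · exact Finset.mem_union_left _ (SL_mono
          (Finset.biUnion_subset_biUnion_of_subset_left _ (hNB j)) hx)
      · rw [hTall]
        split at hx
        · exact absurd hx (Finset.notMem_empty x)
        · exact Finset.mem_union_right _ hx
    | Sum.inr m =>
      rcases Finset.mem_union.mp hx with hx | hx
      · refine Finset.mem_union_left _ ?_
        refine SL_mono ?_ hx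
        intro p hp
        rw [Finset.mem_biUnion] at hp ⊢
        obtain ⟨k, hk, hpk⟩ := hp
        exact ⟨k, hk, opt_sub k hpk⟩
      · exact Finset.mem_union_right _ hx
  have cardTall : Tall.card = D + n := by
    rw [hTall, Finset.card_union_of_disjoint (SL_DS_disj _), card_SL,
      card_biUnion_slots B (Finset.Subset.refl B), card_DS, hD]
  have himage : Finset.univ.image f = Tall := by
    apply Finset.eq_of_subset_of_card_le
    · intro x hx
      rw [Finset.mem_image] at hx
      obtain ⟨i, -, rfl⟩ := hx
      exact hTsub i (hft i)
    · rw [cardTall, Finset.card_image_of_injective _ hfinj, Finset.card_univ]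
      simp only [ι, Fintype.card_sum, Fintype.card_fin]
      omega
  have hsurj : ∀ x ∈ Tall, ∃ i, f i = x := by
    intro x hx
    rw [← himage, Finset.mem_image] at hx
    obtain ⟨i, -, hi⟩ := hx
    exact ⟨i, hi⟩
  -- define the assignment
  set σ : Fin n → Option ℤ := fun j =>
    Sum.elim (fun (p : ℤ × ℕ) => some p.1) (fun _ => none) (f (Sum.inl j)) with hσ
  have hσsome : ∀ j (p : ℤ × ℕ), f (Sum.inl j) = Sum.inl p → σ j = some p.1 := by
    intro j p hp; simp only [hσ, hp, Sum.elim_inl]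
  have hσnone : ∀ j (m : Fin n), f (Sum.inl j) = Sum.inr m → σ j = none := by
    intro j m hp; simp only [hσ, hp, Sum.elim_inr]
  have hmemslot : ∀ j (p : ℤ × ℕ), f (Sum.inl j) = Sum.inl p → p.1 ∈ N j ∧ p.2 < U p.1 := by
    intro j p hp
    have := hft (Sum.inl j)
    rw [hp] at this
    rcases Finset.mem_union.mp this with h | h
    · simp only [SL, Finset.mem_image] at h
      obtain ⟨q, hq, hq2⟩ := h
      have : q = p := Sum.inl_injective hq2
      subst this
      rw [Finset.mem_biUnion] at hq
      obtain ⟨k, hk, hqk⟩ := hq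
      simp only [hslots, Finset.mem_product, Finset.mem_singleton, Finset.mem_range] at hqk
      obtain ⟨h1, h2⟩ := hqk
      subst h1
      exact ⟨hk, h2⟩
    · split at h
      · exact absurd h (Finset.notMem_empty _)
      · simp only [DS, Finset.mem_image] at h
        obtain ⟨q, -, hq⟩ := h
        exact absurd hq (by simp)
  refine ⟨σ, ?_, ?_, ?_⟩
  · intro j k hjk
    rcases hf : f (Sum.inl j) with p | m
    · rw [hσsome j p hf] at hjk
      obtain ⟨h1, -⟩ := hmemslot j p hf
      rwa [← Option.some_inj.mp hjk]
    · rw [hσnone j m hf] at hjk; exact absurd hjk (by simp)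
  · intro j hPj
    rcases hf : f (Sum.inl j) with p | m
    · rw [hσsome j p hf]; simp
    · exfalso
      have := hft (Sum.inl j)
      rw [hf] at this
      rcases Finset.mem_union.mp this with h | h
      · simp only [SL, Finset.mem_image] at h
        obtain ⟨q, -, hq⟩ := h
        exact absurd hq (by simp)
      · rw [if_pos hPj] at h
        exact absurd h (Finset.notMem_empty _)
  · intro k hkB
    constructor
    · -- lower bound
      set Sl : Finset α := (Finset.range (L k)).image (fun i => Sum.inl (k, i)) with hSl
      have cardSl : Sl.card = L k := by
        rw [hSl, Finset.card_image_of_injective, Finset.card_range]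
        intro a b hab
        have := Sum.inl_injective hab
        exact (Prod.ext_iff.mp this).2
      have hSlsub : Sl ⊆ (Finset.univ.filter fun j => σ j = some k).image
          (fun j => f (Sum.inl j)) := by
        intro x hx
        rw [hSl, Finset.mem_image] at hx
        obtain ⟨i, hi, rfl⟩ := hx
        rw [Finset.mem_range] at hi
        have hxT : (Sum.inl (k, i) : α) ∈ Tall := by
          refine Finset.mem_union_left _ (Finset.mem_image_of_mem _ ?_)
          rw [Finset.mem_biUnion]
          refine ⟨k, hkB, ?_⟩
          simp only [hslots, Finset.mem_product, Finset.mem_singleton, Finset.mem_range]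
          exact ⟨trivial, lt_of_lt_of_le hi (hLU k hkB)⟩
        obtain ⟨e, he⟩ := hsurj _ hxT
        match e with
        | Sum.inr m =>
          exfalso
          have := hft (Sum.inr m)
          rw [he] at this
          rcases Finset.mem_union.mp this with h | h
          · simp only [SL, Finset.mem_image] at h
            obtain ⟨q, hq, hq2⟩ := h
            have hqe : q = (k, i) := Sum.inl_injective hq2
            subst hqe
            rw [Finset.mem_biUnion] at hq
            obtain ⟨k', hk', hqk'⟩ := hq
            simp only [hopt, Finset.mem_product, Finset.mem_singleton, Finset.mem_Ico] at hqk'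
            obtain ⟨h1, h2⟩ := hqk'
            subst h1
            omega
          · simp only [DS, Finset.mem_image] at h
            obtain ⟨q, -, hq⟩ := h
            exact absurd hq (by simp)
        | Sum.inl j =>
          rw [Finset.mem_image]
          refine ⟨j, ?_, he⟩
          rw [Finset.mem_filter]
          exact ⟨Finset.mem_univ _, hσsome j (k, i) he⟩
      calc L k = Sl.card := cardSl.symm
        _ ≤ _ := Finset.card_le_card hSlsub
        _ ≤ _ := Finset.card_image_le
    · -- upper bound
      have : (Finset.univ.filter fun j => σ j = some k).card =
          ((Finset.univ.filter fun j => σ j = some k).image fun j => f (Sum.inl j)).card := by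
        rw [Finset.card_image_of_injOn]
        intro a _ b _ hab
        exact Sum.inl_injective (hfinj hab)
      rw [this]
      have hsub : ((Finset.univ.filter fun j => σ j = some k).image fun j => f (Sum.inl j)) ⊆
          (Finset.range (U k)).image (fun i => Sum.inl (k, i)) := by
        intro x hx
        rw [Finset.mem_image] at hx
        obtain ⟨j, hj, rfl⟩ := hx
        rw [Finset.mem_filter] at hj
        rcases hf : f (Sum.inl j) with p | m
        · obtain ⟨-, h2⟩ := hj
          rw [hσsome j p hf] at h2
          have hpk : p.1 = k := Option.some_inj.mp h2
          obtain ⟨-, hU⟩ := hmemslot j p hf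
          rw [Finset.mem_image]
          exact ⟨p.2, by rw [Finset.mem_range, ← hpk]; exact hU, by rw [← hpk]⟩
        · exfalso
          obtain ⟨-, h2⟩ := hj
          rw [hσnone j m hf] at h2; exact absurd h2 (by simp)
      calc _ ≤ ((Finset.range (U k)).image (fun i => (Sum.inl (k, i) : α))).card :=
            Finset.card_le_card hsub
        _ ≤ (Finset.range (U k)).card := Finset.card_image_le
        _ = U k := Finset.card_range _


lemma zD_le {n B hB c g} {j : Fin n} {a : ℝ} (h0 : 0 ≤ a)
    (h : ∀ k ∈ B, c j k - g k ≤ a) : zD n B hB c g j ≤ a :=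
  max_le h0 (Finset.sup'_le _ _ h)

lemma zD_cases {n B hB c g} {j : Fin n} :
    zD n B hB c g j = 0 ∨ ∃ k ∈ B, c j k - g k = zD n B hB c g j := by
  obtain ⟨k, hk, he⟩ := Finset.exists_mem_eq_sup' hB (fun k => c j k - g k)
  rcases le_total (B.sup' hB fun k => c j k - g k) 0 with h | h
  · left; unfold zD; exact max_eq_left h
  · right
    refine ⟨k, hk, ?_⟩
    unfold zD
    rw [max_eq_right h, ← he]

set_option maxHeartbeats 2000000 in
lemma exists_dual_pair (n : ℕ) (B : Finset ℤ) (hB : B.Nonempty) (c : Fin n → ℤ → ℝ)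
    (l u : ℤ → ℕ) (hlu : ∀ k ∈ B, l k ≤ u k) (hl : ∑ k ∈ B, l k ≤ n) :
    ∃ (g : ℤ → ℝ) (y : Fin n → ℤ → ℕ),
      (∀ j, ∀ k ∈ B, y j k ≤ 1) ∧
      (∀ k ∈ B, l k ≤ ∑ j, y j k ∧ ∑ j, y j k ≤ u k) ∧
      (∀ j, ∑ k ∈ B, y j k ≤ 1) ∧
      (∑ j, ∑ k ∈ B, c j k * (y j k : ℝ)) = FD n B hB c l u g := by
  classical
  set M : ℝ := 1 + ∑ j, ∑ k ∈ B, |c j k| with hM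
  have hM1 : 1 ≤ M := by
    have : (0:ℝ) ≤ ∑ j, ∑ k ∈ B, |c j k| :=
      Finset.sum_nonneg fun j _ => Finset.sum_nonneg fun k _ => abs_nonneg _
    rw [hM]; linarith
  have hM0 : (0:ℝ) < M := by linarith
  have hMc : ∀ (j : Fin n), ∀ k ∈ B, |c j k| ≤ M - 1 := by
    intro j k hk
    have h1 : |c j k| ≤ ∑ k' ∈ B, |c j k'| :=
      Finset.single_le_sum (f := fun k' => |c j k'|) (fun k' _ => abs_nonneg _) hk
    have h2 : ∑ k' ∈ B, |c j k'| ≤ ∑ j', ∑ k' ∈ B, |c j' k'| :=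
      Finset.single_le_sum (f := fun j' => ∑ k' ∈ B, |c j' k'|) (fun j' _ =>
        Finset.sum_nonneg fun k' _ => abs_nonneg _) (Finset.mem_univ j)
    rw [hM]; linarith
  set L : ℝ := 2*M*(B.card + 2) + M + 1 with hLdef
  have hcard1 : (1:ℝ) ≤ B.card := by
    have := Finset.card_pos.mpr hB
    exact_mod_cast this
  have hL0 : 0 < L := by rw [hLdef]; nlinarith
  have hLM : M + 1 ≤ L := by rw [hLdef]; nlinarith
  set box : Set (ℤ → ℝ) :=
    Set.pi Set.univ (fun k => if k ∈ B then Set.Icc (-L) L else ({0} : Set ℝ)) with hboxdef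
  have hboxc : IsCompact box := isCompact_univ_pi fun k => by
    split
    exacts [isCompact_Icc, isCompact_singleton]
  have hboxne : (fun _ => (0:ℝ)) ∈ box := by
    intro k _
    dsimp only
    split
    · exact ⟨by linarith, by linarith⟩
    · rfl
  have hzcont : ∀ j, Continuous fun g : ℤ → ℝ => zD n B hB c g j := by
    intro j
    unfold zD
    refine Continuous.max continuous_const ?_
    refine continuous_iff_continuousAt.mpr fun x => ?_
    exact ContinuousAt.finset_sup'_apply hB fun k _ =>
      (continuous_const.sub (continuous_apply k)).continuousAt
  have hFcont : Continuous (FD n B hB c l u) := by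
    unfold FD
    refine Continuous.add ?_ (continuous_finset_sum _ fun j _ => hzcont j)
    refine continuous_finset_sum _ fun k _ => ?_
    exact (continuous_const.mul ((continuous_apply k).max continuous_const)).add
      (continuous_const.mul ((continuous_apply k).min continuous_const))
  obtain ⟨g₀, hg₀box, hg₀min⟩ := hboxc.exists_isMinOn ⟨_, hboxne⟩ hFcont.continuousOn
  set C : Set (ℤ → ℝ) := box ∩ {g | FD n B hB c l u g ≤ FD n B hB c l u g₀} with hCdef
  have hCcomp : IsCompact C := hboxc.inter_right (isClosed_le hFcont continuous_const)
  have hCne : C.Nonempty := ⟨g₀, hg₀box, Set.mem_setOf.mpr le_rfl⟩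
  set hfun : (ℤ → ℝ) → ℝ := fun g => ∑ k ∈ B, (g k - 2 * max (g k - M) 0) with hhdef
  have hhcont : Continuous hfun := by
    refine continuous_finset_sum _ fun k _ => ?_
    exact (continuous_apply k).sub
      (continuous_const.mul (((continuous_apply k).sub continuous_const).max continuous_const))
  obtain ⟨gs, hgsC, hgsmax⟩ := hCcomp.exists_isMaxOn hCne hhcont.continuousOn
  have hgsbox : gs ∈ box := hgsC.1
  have hmin : ∀ g ∈ box, FD n B hB c l u gs ≤ FD n B hB c l u g := fun g hg =>
    le_trans hgsC.2 (hg₀min hg)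
  have hgs0 : ∀ k, k ∉ B → gs k = 0 := by
    intro k hk
    have := hgsbox k (Set.mem_univ k)
    simp only [if_neg hk, Set.mem_singleton_iff] at this
    exact this
  have hgsIcc : ∀ k ∈ B, -L ≤ gs k ∧ gs k ≤ L := by
    intro k hk
    have := hgsbox k (Set.mem_univ k)
    simp only [if_pos hk, Set.mem_Icc] at this
    exact this
  -- key contradiction pattern
  have hcontra : ∀ g' ∈ box, FD n B hB c l u g' ≤ FD n B hB c l u gs →
      hfun g' ≤ hfun gs := by
    intro g' hg'box hle
    exact hgsmax ⟨hg'box, le_trans hle hgsC.2⟩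
  -- Step 1: all coordinates ≤ M
  have hup : ∀ k ∈ B, gs k ≤ M := by
    by_contra hcon
    push_neg at hcon
    obtain ⟨k₁, hk₁B, hk₁⟩ := hcon
    set T : Finset ℤ := B.filter (fun k => M < gs k) with hTdef
    have hk₁T : k₁ ∈ T := Finset.mem_filter.mpr ⟨hk₁B, hk₁⟩
    have hTne : T.Nonempty := ⟨k₁, hk₁T⟩
    have hTgt : ∀ k ∈ T, M < gs k := fun k hk => (Finset.mem_filter.mp hk).2
    set δ : ℝ := T.inf' hTne (fun k => gs k - M) with hδdef
    have hδ0 : 0 < δ := by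
      rw [hδdef, Finset.lt_inf'_iff]
      intro k hk
      have := hTgt k hk
      linarith
    have hδle : ∀ k ∈ T, δ ≤ gs k - M := fun k hk => Finset.inf'_le _ hk
    set g' : ℤ → ℝ := fun k => if k ∈ T then gs k - δ else gs k with hg'def
    have hg'eqT : ∀ k ∈ T, g' k = gs k - δ := fun k hk => by
      simp only [hg'def, if_pos hk]
    have hg'eq : ∀ k, k ∉ T → g' k = gs k := fun k hk => by
      simp only [hg'def, if_neg hk]
    have hg'box : g' ∈ box := by
      intro k _
      by_cases hkB : k ∈ B
      · simp only [if_pos hkB, Set.mem_Icc]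
        obtain ⟨ha, hb⟩ := hgsIcc k hkB
        by_cases hkT : k ∈ T
        · rw [hg'eqT k hkT]
          have h1 := hδle k hkT
          constructor <;> linarith
        · rw [hg'eq k hkT]
          exact ⟨ha, hb⟩
      · have hkT : k ∉ T := fun h => hkB (Finset.filter_subset _ _ h)
        simp only [if_neg hkB, Set.mem_singleton_iff]
        rw [hg'eq k hkT]
        exact hgs0 k hkB
    have hz : ∀ j, zD n B hB c g' j = zD n B hB c gs j := by
      intro j
      unfold zD
      apply le_antisymm
      · refine max_le (le_max_left _ _) (Finset.sup'_le _ _ fun k hk => ?_)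
        by_cases hkT : k ∈ T
        · have h1 := hδle k hkT
          have h2 := abs_le.mp (hMc j k hk)
          have h3 : c j k - g' k ≤ 0 := by rw [hg'eqT k hkT]; linarith
          exact le_trans h3 (le_max_left _ _)
        · rw [hg'eq k hkT]
          exact zD_ge hk
      · refine max_le (le_max_left _ _) ?_
        obtain ⟨kj, hkjB, hkjeq⟩ := Finset.exists_mem_eq_sup' hB (fun k => c j k - gs k)
        rw [hkjeq]
        by_cases hkjT : kj ∈ T
        · have h2 := abs_le.mp (hMc j kj hkjB)
          have h3 := hTgt kj hkjT
          have : c j kj - gs kj ≤ 0 := by linarith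
          exact le_trans this (le_max_left _ _)
        · rw [show c j kj - gs kj = c j kj - g' kj by rw [hg'eq kj hkjT]]
          exact le_trans (Finset.le_sup' (fun k => c j k - g' k) hkjB) (le_max_right _ _)
    have hcolk : ∀ k ∈ B, (u k : ℝ) * max (g' k) 0 + (l k : ℝ) * min (g' k) 0
        = ((u k : ℝ) * max (gs k) 0 + (l k : ℝ) * min (gs k) 0)
          - (if k ∈ T then δ * u k else 0) := by
      intro k hk
      by_cases hkT : k ∈ T
      · have h1 := hδle k hkT
        have h3 := hTgt k hkT
        rw [if_pos hkT, hg'eqT k hkT]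
        rw [max_eq_left (by linarith : (0:ℝ) ≤ gs k - δ), max_eq_left (by linarith : (0:ℝ) ≤ gs k),
            min_eq_right (by linarith : (0:ℝ) ≤ gs k - δ), min_eq_right (by linarith : (0:ℝ) ≤ gs k)]
        ring
      · rw [if_neg hkT, hg'eq k hkT]
        ring
    have hFle : FD n B hB c l u g' ≤ FD n B hB c l u gs := by
      unfold FD
      have e2 : ∑ j, zD n B hB c g' j = ∑ j, zD n B hB c gs j :=
        Finset.sum_congr rfl fun j _ => hz j
      rw [Finset.sum_congr rfl hcolk, Finset.sum_sub_distrib, e2]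
      have h0 : 0 ≤ ∑ k ∈ B, (if k ∈ T then δ * (u k : ℝ) else 0) :=
        Finset.sum_nonneg fun k _ => by
          split
          · positivity
          · exact le_refl 0
      linarith
    have hhgt : hfun gs < hfun g' := by
      simp only [hhdef]
      refine Finset.sum_lt_sum (fun k hk => ?_) ⟨k₁, hk₁B, ?_⟩
      · by_cases hkT : k ∈ T
        · have h1 := hδle k hkT
          have h3 := hTgt k hkT
          rw [hg'eqT k hkT]
          rw [max_eq_left (by linarith : (0:ℝ) ≤ gs k - δ - M),
              max_eq_left (by linarith : (0:ℝ) ≤ gs k - M)]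
          linarith
        · rw [hg'eq k hkT]
      · have h1 := hδle k₁ hk₁T
        have h3 := hTgt k₁ hk₁T
        rw [hg'eqT k₁ hk₁T]
        rw [max_eq_left (by linarith : (0:ℝ) ≤ gs k₁ - δ - M),
            max_eq_left (by linarith : (0:ℝ) ≤ gs k₁ - M)]
        linarith
    exact absurd (hcontra g' hg'box hFle) (not_le.mpr hhgt)
  -- Step 2: all coordinates > -(L-1)
  have hlow : ∀ k ∈ B, -(L-1) < gs k := by
    by_contra hcon
    push_neg at hcon
    obtain ⟨k₀, hk₀B, hk₀⟩ := hcon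
    set m₀ : ℝ := gs k₀ with hm₀def
    have hwin : ∃ i : ℕ, i < B.card ∧
        ∀ k ∈ B, ¬(m₀ + 2*M*i < gs k ∧ gs k ≤ m₀ + 2*M*i + 2*M) := by
      by_contra hcon2
      push_neg at hcon2
      have hch : ∀ i : ℕ, ∃ k : ℤ, i < B.card →
          (k ∈ B ∧ (m₀ + 2*M*i < gs k ∧ gs k ≤ m₀ + 2*M*i + 2*M)) := by
        intro i
        by_cases h : i < B.card
        · obtain ⟨k, hk1, hk2⟩ := hcon2 i h
          exact ⟨k, fun _ => ⟨hk1, hk2⟩⟩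
        · exact ⟨0, fun h' => absurd h' h⟩
      choose χ hχ using hch
      have hmaps : ∀ i ∈ Finset.range B.card, χ i ∈ B.erase k₀ := by
        intro i hi
        rw [Finset.mem_range] at hi
        obtain ⟨h1, h2, h3⟩ := hχ i hi
        refine Finset.mem_erase.mpr ⟨?_, h1⟩
        intro he
        rw [he] at h2
        have hnn : (0:ℝ) ≤ 2*M*i := by positivity
        rw [← hm₀def] at h2
        linarith
      have hinj : Set.InjOn χ (Finset.range B.card) := by
        intro i hi i' hi' he
        simp only [Finset.coe_range, Set.mem_Iio] at hi hi'
        by_contra hne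
        obtain ⟨ha1, ha2, ha3⟩ := hχ i hi
        obtain ⟨hb1, hb2, hb3⟩ := hχ i' hi'
        rw [he] at ha2 ha3
        rcases lt_or_gt_of_ne hne with hlt | hlt
        · have : (i:ℝ) + 1 ≤ (i':ℝ) := by exact_mod_cast hlt
          nlinarith
        · have : (i':ℝ) + 1 ≤ (i:ℝ) := by exact_mod_cast hlt
          nlinarith
      have hcard := Finset.card_le_card_of_injOn χ hmaps hinj
      rw [Finset.card_range, Finset.card_erase_of_mem hk₀B] at hcard
      have hBpos : 0 < B.card := Finset.card_pos.mpr hB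
      omega
    obtain ⟨i, hiB, hwini⟩ := hwin
    set tt : ℝ := m₀ + 2*M*i with httdef
    have hicard : (i:ℝ) + 1 ≤ (B.card:ℝ) := by exact_mod_cast hiB
    have hm₀L : m₀ ≤ -(L-1) := hk₀
    have htt7 : tt ≤ -7*M := by
      rw [httdef, hLdef] at *
      nlinarith
    have hm₀tt : m₀ ≤ tt := by
      rw [httdef]
      have : (0:ℝ) ≤ 2*M*i := by positivity
      linarith
    set T := B.filter (fun k => gs k ≤ tt) with hTdef
    have hk₀T : k₀ ∈ T := Finset.mem_filter.mpr ⟨hk₀B, hm₀tt⟩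
    have hTle : ∀ k ∈ T, gs k ≤ tt := fun k hk => (Finset.mem_filter.mp hk).2
    have hout : ∀ k ∈ B, k ∉ T → tt + 2*M < gs k := by
      intro k hkB hkT
      have h1 : ¬ gs k ≤ tt := fun h => hkT (Finset.mem_filter.mpr ⟨hkB, h⟩)
      push_neg at h1
      by_contra h2
      push_neg at h2
      exact hwini k hkB ⟨h1, h2⟩
    set g' : ℤ → ℝ := fun k => if k ∈ T then gs k + 1 else gs k with hg'def
    have hg'eqT : ∀ k ∈ T, g' k = gs k + 1 := fun k hk => by
      simp only [hg'def, if_pos hk]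
    have hg'eq : ∀ k, k ∉ T → g' k = gs k := fun k hk => by
      simp only [hg'def, if_neg hk]
    have hg'box : g' ∈ box := by
      intro k _
      by_cases hkB : k ∈ B
      · simp only [if_pos hkB, Set.mem_Icc]
        obtain ⟨ha, hb⟩ := hgsIcc k hkB
        by_cases hkT : k ∈ T
        · rw [hg'eqT k hkT]
          have h1 := hTle k hkT
          constructor <;> linarith
        · rw [hg'eq k hkT]
          exact ⟨ha, hb⟩
      · have hkT : k ∉ T := fun h => hkB (Finset.filter_subset _ _ h)
        simp only [if_neg hkB, Set.mem_singleton_iff]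
        rw [hg'eq k hkT]
        exact hgs0 k hkB
    have hzd : ∀ j, zD n B hB c g' j = zD n B hB c gs j - 1 := by
      intro j
      obtain ⟨kj, hkjB, hkjeq⟩ := Finset.exists_mem_eq_sup' hB (fun k => c j k - gs k)
      have habs0 := abs_le.mp (hMc j k₀ hk₀B)
      have hsupge : -(M-1) - m₀ ≤ B.sup' hB (fun k => c j k - gs k) := by
        refine le_trans ?_ (Finset.le_sup' (fun k => c j k - gs k) hk₀B)
        rw [← hm₀def]
        linarith
      have hkjT : kj ∈ T := by
        by_contra hkjT
        have h1 := hout kj hkjB hkjT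
        have h2 := abs_le.mp (hMc j kj hkjB)
        rw [hkjeq] at hsupge
        linarith
      have hsup' : (B.sup' hB fun k => c j k - g' k)
          = (B.sup' hB fun k => c j k - gs k) - 1 := by
        apply le_antisymm
        · refine Finset.sup'_le _ _ fun k hk => ?_
          by_cases hkT : k ∈ T
          · rw [hg'eqT k hkT]
            have := Finset.le_sup' (fun k => c j k - gs k) hk
            linarith
          · rw [hg'eq k hkT]
            have h1 := hout k hk hkT
            have h2 := abs_le.mp (hMc j k hk)
            linarith
        · have h3 := Finset.le_sup' (fun k => c j k - g' k) hkjB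
          rw [hkjeq]
          rw [hg'eqT kj hkjT] at h3
          linarith
      have hSbig : 1 ≤ (B.sup' hB fun k => c j k - gs k) - 1 := by
        rw [hLdef] at hm₀L
        nlinarith
      unfold zD
      rw [hsup', max_eq_right (by linarith), max_eq_right (by linarith)]
    have hcolk : ∀ k ∈ B, (u k : ℝ) * max (g' k) 0 + (l k : ℝ) * min (g' k) 0
        = ((u k : ℝ) * max (gs k) 0 + (l k : ℝ) * min (gs k) 0)
          + (if k ∈ T then (l k:ℝ) else 0) := by
      intro k hk
      by_cases hkT : k ∈ T
      · have hle := hTle k hkT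
        rw [if_pos hkT, hg'eqT k hkT,
          max_eq_right (by linarith : gs k + 1 ≤ (0:ℝ)),
          max_eq_right (by linarith : gs k ≤ (0:ℝ)),
          min_eq_left (by linarith : gs k + 1 ≤ (0:ℝ)),
          min_eq_left (by linarith : gs k ≤ (0:ℝ))]
        ring
      · rw [if_neg hkT, hg'eq k hkT]
        ring
    have hFle : FD n B hB c l u g' ≤ FD n B hB c l u gs := by
      unfold FD
      have e2 : ∑ j, zD n B hB c g' j = (∑ j, zD n B hB c gs j) - n := by
        rw [Finset.sum_congr rfl (fun j (_ : j ∈ univ) => hzd j), Finset.sum_sub_distrib]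
        simp
      rw [Finset.sum_congr rfl hcolk, Finset.sum_add_distrib, e2]
      have h1 : ∑ k ∈ B, (if k ∈ T then (l k:ℝ) else 0) ≤ (n:ℝ) := by
        have e3 : ∑ k ∈ B, (if k ∈ T then (l k:ℝ) else 0) = ∑ k ∈ T, (l k : ℝ) := by
          rw [hTdef, Finset.sum_filter]
          exact Finset.sum_congr rfl fun k hk => by
            by_cases h : gs k ≤ tt <;> simp [h, Finset.mem_filter, hk]
        rw [e3]
        have h4 : ∑ k ∈ T, l k ≤ ∑ k ∈ B, l k :=
          Finset.sum_le_sum_of_subset (Finset.filter_subset _ _)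
        have h5 := le_trans h4 hl
        exact_mod_cast h5
      linarith
    have hhgt : hfun gs < hfun g' := by
      simp only [hhdef]
      refine Finset.sum_lt_sum (fun k hk => ?_) ⟨k₀, hk₀B, ?_⟩
      · by_cases hkT : k ∈ T
        · have hle := hTle k hkT
          rw [hg'eqT k hkT,
            max_eq_right (by linarith : gs k + 1 - M ≤ (0:ℝ)),
            max_eq_right (by linarith : gs k - M ≤ (0:ℝ))]
          linarith
        · rw [hg'eq k hkT]
      · have hle := hTle k₀ hk₀T
        rw [hg'eqT k₀ hk₀T,
          max_eq_right (by linarith : gs k₀ + 1 - M ≤ (0:ℝ)),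
          max_eq_right (by linarith : gs k₀ - M ≤ (0:ℝ))]
        linarith
    exact absurd (hcontra g' hg'box hFle) (not_le.mpr hhgt)
  -- the tight graph
  set Nf : Fin n → Finset ℤ := fun j => B.filter (fun k => c j k - gs k = zD n B hB c gs j)
    with hNfdef
  have hNfB : ∀ j, Nf j ⊆ B := fun j => Finset.filter_subset _ _
  have hcastL : ∀ k : ℤ, (((if 0 < gs k then u k else l k : ℕ)) : ℝ)
      = (if 0 < gs k then (u k:ℝ) else (l k:ℝ)) := by
    intro k
    by_cases h : 0 < gs k
    · rw [if_pos h, if_pos h]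
    · rw [if_neg h, if_neg h]
  have hcastU : ∀ k : ℤ, (((if gs k < 0 then l k else u k : ℕ)) : ℝ)
      = (if gs k < 0 then (l k:ℝ) else (u k:ℝ)) := by
    intro k
    by_cases h : gs k < 0
    · rw [if_pos h, if_pos h]
    · rw [if_neg h, if_neg h]
  -- condition (a)
  have cond_a : ∀ S ⊆ B, (∑ k ∈ S, (if 0 < gs k then u k else l k)) ≤
      (univ.filter fun j => ((Nf j) ∩ S).Nonempty).card := by
    intro S hSB
    set Q : Finset ℝ := ((S.filter fun k => 0 < gs k).image gs) ∪
      ((((univ : Finset (Fin n)) ×ˢ S).filter fun p =>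
          c p.1 p.2 - gs p.2 < zD n B hB c gs p.1).image
        (fun p => zD n B hB c gs p.1 - (c p.1 p.2 - gs p.2))) with hQdef
    have hQpos : ∀ q ∈ Q, 0 < q := by
      intro q hq
      rw [hQdef, Finset.mem_union] at hq
      rcases hq with hq | hq
      · obtain ⟨k, hk, rfl⟩ := Finset.mem_image.mp hq
        exact (Finset.mem_filter.mp hk).2
      · obtain ⟨p, hp, rfl⟩ := Finset.mem_image.mp hq
        have := (Finset.mem_filter.mp hp).2
        linarith
    set δ : ℝ := if hQ : Q.Nonempty then min 1 (Q.min' hQ) else 1 with hδdef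
    have hδ0 : 0 < δ := by
      rw [hδdef]; split
      · exact lt_min one_pos (hQpos _ (Q.min'_mem (by assumption)))
      · exact one_pos
    have hδ1 : δ ≤ 1 := by
      rw [hδdef]; split
      · exact min_le_left _ _
      · exact le_refl 1
    have hδQ : ∀ q ∈ Q, δ ≤ q := by
      intro q hq
      rw [hδdef]
      split
      · exact le_trans (min_le_right _ _) (Finset.min'_le _ _ hq)
      · exact absurd (⟨q, hq⟩ : Q.Nonempty) (by assumption)
    set g' : ℤ → ℝ := fun k => if k ∈ S then gs k - δ else gs k with hg'def
    have hg'eqS : ∀ k ∈ S, g' k = gs k - δ := fun k hk => by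
      simp only [hg'def, if_pos hk]
    have hg'eq : ∀ k, k ∉ S → g' k = gs k := fun k hk => by
      simp only [hg'def, if_neg hk]
    have hg'box : g' ∈ box := by
      intro k _
      by_cases hkB : k ∈ B
      · simp only [if_pos hkB, Set.mem_Icc]
        obtain ⟨ha, hb⟩ := hgsIcc k hkB
        by_cases hkS : k ∈ S
        · rw [hg'eqS k hkS]
          have h2 := hlow k hkB
          constructor <;> linarith
        · rw [hg'eq k hkS]; exact ⟨ha, hb⟩
      · have hn : k ∉ S := fun h => hkB (hSB h)
        simp only [if_neg hkB, Set.mem_singleton_iff]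
        rw [hg'eq k hn]
        exact hgs0 k hkB
    have hzd : ∀ j, zD n B hB c g' j = zD n B hB c gs j
        + (if ((Nf j) ∩ S).Nonempty then δ else 0) := by
      intro j
      by_cases htight : ((Nf j) ∩ S).Nonempty
      · rw [if_pos htight]
        obtain ⟨k₀, hk₀⟩ := htight
        rw [Finset.mem_inter] at hk₀
        obtain ⟨hk₀N, hk₀S⟩ := hk₀
        have hk₀B : k₀ ∈ B := (Finset.mem_filter.mp hk₀N).1
        have hk₀eq : c j k₀ - gs k₀ = zD n B hB c gs j := (Finset.mem_filter.mp hk₀N).2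
        have hz0 : (0:ℝ) ≤ zD n B hB c gs j := zD_nonneg
        apply le_antisymm
        · refine zD_le (by linarith) fun k hk => ?_
          by_cases hkS : k ∈ S
          · rw [hg'eqS k hkS]
            have := zD_ge (n := n) (hB := hB) (c := c) (g := gs) (j := j) hk
            linarith
          · rw [hg'eq k hkS]
            have := zD_ge (n := n) (hB := hB) (c := c) (g := gs) (j := j) hk
            linarith
        · have h3 : zD n B hB c gs j + δ ≤ c j k₀ - g' k₀ := by
            rw [hg'eqS k₀ hk₀S]
            linarith
          exact le_trans h3 (zD_ge hk₀B)
      · rw [if_neg htight, add_zero]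
        apply le_antisymm
        · refine zD_le zD_nonneg fun k hk => ?_
          by_cases hkS : k ∈ S
          · have hne : c j k - gs k ≠ zD n B hB c gs j := by
              intro he
              exact htight ⟨k, Finset.mem_inter.mpr ⟨Finset.mem_filter.mpr ⟨hk, he⟩, hkS⟩⟩
            have hlt : c j k - gs k < zD n B hB c gs j := lt_of_le_of_ne (zD_ge hk) hne
            have hq : zD n B hB c gs j - (c j k - gs k) ∈ Q := by
              rw [hQdef]
              refine Finset.mem_union_right _ (Finset.mem_image.mpr ⟨(j, k), ?_, rfl⟩)
              exact Finset.mem_filter.mpr ⟨Finset.mem_product.mpr ⟨Finset.mem_univ _, hkS⟩, hlt⟩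
            have := hδQ _ hq
            rw [hg'eqS k hkS]
            linarith
          · rw [hg'eq k hkS]
            exact zD_ge hk
        · rcases zD_cases (n := n) (B := B) (hB := hB) (c := c) (g := gs) (j := j) with
            h0 | ⟨kj, hkjB, hkje⟩
          · rw [h0]; exact zD_nonneg
          · have hkjS : kj ∉ S := fun hkjS =>
              htight ⟨kj, Finset.mem_inter.mpr ⟨Finset.mem_filter.mpr ⟨hkjB, hkje⟩, hkjS⟩⟩
            calc zD n B hB c gs j = c j kj - gs kj := hkje.symm
              _ = c j kj - g' kj := by rw [hg'eq kj hkjS]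
              _ ≤ zD n B hB c g' j := zD_ge hkjB
    have hcolk : ∀ k ∈ B, (u k : ℝ) * max (g' k) 0 + (l k : ℝ) * min (g' k) 0
        = ((u k : ℝ) * max (gs k) 0 + (l k : ℝ) * min (gs k) 0)
          - (if k ∈ S then δ * (if 0 < gs k then (u k:ℝ) else (l k:ℝ)) else 0) := by
      intro k hk
      by_cases hkS : k ∈ S
      · rcases lt_trichotomy (gs k) 0 with hneg | h0 | hpos
        · rw [if_pos hkS, if_neg (not_lt.mpr (le_of_lt hneg)), hg'eqS k hkS,
            max_eq_right (by linarith : gs k - δ ≤ (0:ℝ)),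
            max_eq_right (by linarith : gs k ≤ (0:ℝ)),
            min_eq_left (by linarith : gs k - δ ≤ (0:ℝ)),
            min_eq_left (by linarith : gs k ≤ (0:ℝ))]
          ring
        · rw [if_pos hkS, if_neg (by rw [h0]; exact lt_irrefl 0), hg'eqS k hkS, h0,
            max_eq_right (by linarith : (0:ℝ) - δ ≤ 0),
            min_eq_left (by linarith : (0:ℝ) - δ ≤ 0),
            max_eq_right (le_refl (0:ℝ)), min_eq_left (le_refl (0:ℝ))]
          ring
        · have hq : gs k ∈ Q := by
            rw [hQdef]
            exact Finset.mem_union_left _ (Finset.mem_image.mpr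
              ⟨k, Finset.mem_filter.mpr ⟨hkS, hpos⟩, rfl⟩)
          have hδgs := hδQ _ hq
          rw [if_pos hkS, if_pos hpos, hg'eqS k hkS,
            max_eq_left (by linarith : (0:ℝ) ≤ gs k - δ),
            max_eq_left (by linarith : (0:ℝ) ≤ gs k),
            min_eq_right (by linarith : (0:ℝ) ≤ gs k - δ),
            min_eq_right (by linarith : (0:ℝ) ≤ gs k)]
          ring
      · rw [if_neg hkS, hg'eq k hkS]
        ring
    have hkey := hmin g' hg'box
    unfold FD at hkey
    have ecol : ∑ k ∈ B, ((u k : ℝ) * max (g' k) 0 + (l k : ℝ) * min (g' k) 0)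
        = (∑ k ∈ B, ((u k : ℝ) * max (gs k) 0 + (l k : ℝ) * min (gs k) 0))
          - δ * ∑ k ∈ S, (if 0 < gs k then (u k:ℝ) else (l k:ℝ)) := by
      rw [Finset.sum_congr rfl hcolk, Finset.sum_sub_distrib]
      congr 1
      rw [Finset.mul_sum, Finset.sum_ite_mem, Finset.inter_eq_right.mpr hSB]
    have ez : ∑ j, zD n B hB c g' j = (∑ j, zD n B hB c gs j)
        + δ * ((univ.filter fun j => ((Nf j) ∩ S).Nonempty).card : ℝ) := by
      rw [Finset.sum_congr rfl (fun j (_ : j ∈ univ) => hzd j), Finset.sum_add_distrib]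
      congr 1
      rw [Finset.sum_ite, Finset.sum_const, Finset.sum_const_zero, add_zero,
        nsmul_eq_mul, mul_comm]
    rw [ecol, ez] at hkey
    have hfin : ∑ k ∈ S, (if 0 < gs k then (u k:ℝ) else (l k:ℝ)) ≤
        ((univ.filter fun j => ((Nf j) ∩ S).Nonempty).card : ℝ) := by
      have h5 : δ * (∑ k ∈ S, (if 0 < gs k then (u k:ℝ) else (l k:ℝ)))
          ≤ δ * ((univ.filter fun j => ((Nf j) ∩ S).Nonempty).card : ℝ) := by linarith
      exact le_of_mul_le_mul_left h5 hδ0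
    have hcast : ((∑ k ∈ S, (if 0 < gs k then u k else l k) : ℕ) : ℝ)
        = ∑ k ∈ S, (if 0 < gs k then (u k:ℝ) else (l k:ℝ)) := by
      rw [Nat.cast_sum]
      exact Finset.sum_congr rfl fun k _ => hcastL k
    rw [← hcast] at hfin
    exact_mod_cast hfin
  -- condition (b)
  have cond_b : ∀ S ⊆ B,
      (univ.filter fun j => (0 < zD n B hB c gs j) ∧ Nf j ⊆ S).card ≤
      ∑ k ∈ S, (if gs k < 0 then l k else u k) := by
    intro S hSB
    set Q : Finset ℝ := (((S.filter fun k => gs k < 0).image (fun k => -gs k)) ∪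
      ((((univ : Finset (Fin n)) ×ˢ B).filter fun p =>
          c p.1 p.2 - gs p.2 < zD n B hB c gs p.1).image
        (fun p => zD n B hB c gs p.1 - (c p.1 p.2 - gs p.2)))) ∪
      ((univ.filter fun j => 0 < zD n B hB c gs j).image
        (fun j => zD n B hB c gs j)) with hQdef
    have hQpos : ∀ q ∈ Q, 0 < q := by
      intro q hq
      rw [hQdef] at hq
      rcases Finset.mem_union.mp hq with hq | hq
      · rcases Finset.mem_union.mp hq with hq | hq
        · obtain ⟨k, hk, rfl⟩ := Finset.mem_image.mp hq
          have := (Finset.mem_filter.mp hk).2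
          linarith
        · obtain ⟨p, hp, rfl⟩ := Finset.mem_image.mp hq
          have := (Finset.mem_filter.mp hp).2
          linarith
      · obtain ⟨j, hj, rfl⟩ := Finset.mem_image.mp hq
        exact (Finset.mem_filter.mp hj).2
    set δ : ℝ := if hQ : Q.Nonempty then min 1 (Q.min' hQ) else 1 with hδdef
    have hδ0 : 0 < δ := by
      rw [hδdef]; split
      · exact lt_min one_pos (hQpos _ (Q.min'_mem (by assumption)))
      · exact one_pos
    have hδ1 : δ ≤ 1 := by
      rw [hδdef]; split
      · exact min_le_left _ _
      · exact le_refl 1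
    have hδQ : ∀ q ∈ Q, δ ≤ q := by
      intro q hq
      rw [hδdef]
      split
      · exact le_trans (min_le_right _ _) (Finset.min'_le _ _ hq)
      · exact absurd (⟨q, hq⟩ : Q.Nonempty) (by assumption)
    set g' : ℤ → ℝ := fun k => if k ∈ S then gs k + δ else gs k with hg'def
    have hg'eqS : ∀ k ∈ S, g' k = gs k + δ := fun k hk => by
      simp only [hg'def, if_pos hk]
    have hg'eq : ∀ k, k ∉ S → g' k = gs k := fun k hk => by
      simp only [hg'def, if_neg hk]
    have hg'box : g' ∈ box := by
      intro k _
      by_cases hkB : k ∈ B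
      · simp only [if_pos hkB, Set.mem_Icc]
        obtain ⟨ha, hb⟩ := hgsIcc k hkB
        by_cases hkS : k ∈ S
        · rw [hg'eqS k hkS]
          have h2 := hup k hkB
          constructor <;> linarith
        · rw [hg'eq k hkS]; exact ⟨ha, hb⟩
      · have hn : k ∉ S := fun h => hkB (hSB h)
        simp only [if_neg hkB, Set.mem_singleton_iff]
        rw [hg'eq k hn]
        exact hgs0 k hkB
    have hzd : ∀ j, zD n B hB c g' j = zD n B hB c gs j
        - (if (0 < zD n B hB c gs j ∧ Nf j ⊆ S) then δ else 0) := by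
      intro j
      by_cases hP : 0 < zD n B hB c gs j ∧ Nf j ⊆ S
      · rw [if_pos hP]
        obtain ⟨hPz, hPN⟩ := hP
        rcases zD_cases (n := n) (B := B) (hB := hB) (c := c) (g := gs) (j := j) with
          h0 | ⟨kj, hkjB, hkje⟩
        · rw [h0] at hPz; exact absurd hPz (lt_irrefl 0)
        · have hkjN : kj ∈ Nf j := Finset.mem_filter.mpr ⟨hkjB, hkje⟩
          have hkjS : kj ∈ S := hPN hkjN
          have hqz : zD n B hB c gs j ∈ Q := by
            rw [hQdef]
            exact Finset.mem_union_right _ (Finset.mem_image.mpr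
              ⟨j, Finset.mem_filter.mpr ⟨Finset.mem_univ _, hPz⟩, rfl⟩)
          have hδz := hδQ _ hqz
          apply le_antisymm
          · refine zD_le (by linarith) fun k hk => ?_
            by_cases hkN : k ∈ Nf j
            · have hkS := hPN hkN
              have heq : c j k - gs k = zD n B hB c gs j := (Finset.mem_filter.mp hkN).2
              rw [hg'eqS k hkS]
              linarith
            · have hne : c j k - gs k ≠ zD n B hB c gs j := fun he =>
                hkN (Finset.mem_filter.mpr ⟨hk, he⟩)
              have hlt : c j k - gs k < zD n B hB c gs j := lt_of_le_of_ne (zD_ge hk) hne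
              have hq2 : zD n B hB c gs j - (c j k - gs k) ∈ Q := by
                rw [hQdef]
                refine Finset.mem_union_left _ (Finset.mem_union_right _
                  (Finset.mem_image.mpr ⟨(j, k), ?_, rfl⟩))
                exact Finset.mem_filter.mpr ⟨Finset.mem_product.mpr
                  ⟨Finset.mem_univ _, hk⟩, hlt⟩
              have := hδQ _ hq2
              by_cases hkS : k ∈ S
              · rw [hg'eqS k hkS]; linarith
              · rw [hg'eq k hkS]; linarith
          · have h3 : zD n B hB c gs j - δ ≤ c j kj - g' kj := by
              rw [hg'eqS kj hkjS]
              linarith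
            exact le_trans h3 (zD_ge hkjB)
      · rw [if_neg hP, sub_zero]
        apply le_antisymm
        · refine zD_le zD_nonneg fun k hk => ?_
          have hzge := zD_ge (n := n) (hB := hB) (c := c) (g := gs) (j := j) hk
          by_cases hkS : k ∈ S
          · rw [hg'eqS k hkS]; linarith
          · rw [hg'eq k hkS]; exact hzge
        · by_cases hPz : 0 < zD n B hB c gs j
          · have hns : ¬ Nf j ⊆ S := fun h => hP ⟨hPz, h⟩
            obtain ⟨k₀, hk₀N, hk₀S⟩ := Finset.not_subset.mp hns
            have hk₀B : k₀ ∈ B := (Finset.mem_filter.mp hk₀N).1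
            have heq : c j k₀ - gs k₀ = zD n B hB c gs j := (Finset.mem_filter.mp hk₀N).2
            calc zD n B hB c gs j = c j k₀ - gs k₀ := heq.symm
              _ = c j k₀ - g' k₀ := by rw [hg'eq k₀ hk₀S]
              _ ≤ zD n B hB c g' j := zD_ge hk₀B
          · have h0 : zD n B hB c gs j = 0 := le_antisymm (not_lt.mp hPz) zD_nonneg
            rw [h0]
            exact zD_nonneg
    have hcolk : ∀ k ∈ B, (u k : ℝ) * max (g' k) 0 + (l k : ℝ) * min (g' k) 0
        = ((u k : ℝ) * max (gs k) 0 + (l k : ℝ) * min (gs k) 0)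
          + (if k ∈ S then δ * (if gs k < 0 then (l k:ℝ) else (u k:ℝ)) else 0) := by
      intro k hk
      by_cases hkS : k ∈ S
      · rcases lt_trichotomy (gs k) 0 with hneg | h0 | hpos
        · have hq : -gs k ∈ Q := by
            rw [hQdef]
            exact Finset.mem_union_left _ (Finset.mem_union_left _ (Finset.mem_image.mpr
              ⟨k, Finset.mem_filter.mpr ⟨hkS, hneg⟩, rfl⟩))
          have hδgs := hδQ _ hq
          rw [if_pos hkS, if_pos hneg, hg'eqS k hkS,
            max_eq_right (by linarith : gs k + δ ≤ (0:ℝ)),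
            max_eq_right (by linarith : gs k ≤ (0:ℝ)),
            min_eq_left (by linarith : gs k + δ ≤ (0:ℝ)),
            min_eq_left (by linarith : gs k ≤ (0:ℝ))]
          ring
        · rw [if_pos hkS, if_neg (by rw [h0]; exact lt_irrefl 0), hg'eqS k hkS, h0,
            max_eq_left (by linarith : (0:ℝ) ≤ 0 + δ),
            min_eq_right (by linarith : (0:ℝ) ≤ 0 + δ),
            max_eq_right (le_refl (0:ℝ)), min_eq_left (le_refl (0:ℝ))]
          ring
        · rw [if_pos hkS, if_neg (not_lt.mpr (le_of_lt hpos)), hg'eqS k hkS,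
            max_eq_left (by linarith : (0:ℝ) ≤ gs k + δ),
            max_eq_left (by linarith : (0:ℝ) ≤ gs k),
            min_eq_right (by linarith : (0:ℝ) ≤ gs k + δ),
            min_eq_right (by linarith : (0:ℝ) ≤ gs k)]
          ring
      · rw [if_neg hkS, hg'eq k hkS]
        ring
    have hkey := hmin g' hg'box
    unfold FD at hkey
    have ecol : ∑ k ∈ B, ((u k : ℝ) * max (g' k) 0 + (l k : ℝ) * min (g' k) 0)
        = (∑ k ∈ B, ((u k : ℝ) * max (gs k) 0 + (l k : ℝ) * min (gs k) 0))
          + δ * ∑ k ∈ S, (if gs k < 0 then (l k:ℝ) else (u k:ℝ)) := by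
      rw [Finset.sum_congr rfl hcolk, Finset.sum_add_distrib]
      congr 1
      rw [Finset.mul_sum, Finset.sum_ite_mem, Finset.inter_eq_right.mpr hSB]
    have ez : ∑ j, zD n B hB c g' j = (∑ j, zD n B hB c gs j)
        - δ * ((univ.filter fun j => (0 < zD n B hB c gs j) ∧ Nf j ⊆ S).card : ℝ) := by
      rw [Finset.sum_congr rfl (fun j (_ : j ∈ univ) => hzd j), Finset.sum_sub_distrib]
      congr 1
      rw [Finset.sum_ite, Finset.sum_const, Finset.sum_const_zero, add_zero,
        nsmul_eq_mul, mul_comm]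
    rw [ecol, ez] at hkey
    have hfin : ((univ.filter fun j => (0 < zD n B hB c gs j) ∧ Nf j ⊆ S).card : ℝ) ≤
        ∑ k ∈ S, (if gs k < 0 then (l k:ℝ) else (u k:ℝ)) := by
      have h5 : δ * ((univ.filter fun j => (0 < zD n B hB c gs j) ∧ Nf j ⊆ S).card : ℝ)
          ≤ δ * (∑ k ∈ S, (if gs k < 0 then (l k:ℝ) else (u k:ℝ))) := by linarith
      exact le_of_mul_le_mul_left h5 hδ0
    have hcast : ((∑ k ∈ S, (if gs k < 0 then l k else u k) : ℕ) : ℝ)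
        = ∑ k ∈ S, (if gs k < 0 then (l k:ℝ) else (u k:ℝ)) := by
      rw [Nat.cast_sum]
      exact Finset.sum_congr rfl fun k _ => hcastU k
    rw [← hcast] at hfin
    exact_mod_cast hfin
  -- apply the combinatorial lemma
  obtain ⟨σ, hσN, hσP, hσcount⟩ := flow_feasible B
    (fun k => if 0 < gs k then u k else l k)
    (fun k => if gs k < 0 then l k else u k)
    Nf (fun j => 0 < zD n B hB c gs j)
    hNfB
    (by
      intro k hk
      show (if 0 < gs k then u k else l k) ≤ (if gs k < 0 then l k else u k)
      rcases lt_trichotomy (gs k) 0 with h | h | h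
      · rw [if_neg (not_lt.mpr (le_of_lt h)), if_pos h]
      · rw [if_neg (by rw [h]; exact lt_irrefl 0), if_neg (by rw [h]; exact lt_irrefl 0)]
        exact hlu k hk
      · rw [if_pos h, if_neg (not_lt.mpr (le_of_lt h))])
    cond_a cond_b
  set y : Fin n → ℤ → ℕ := fun j k => if σ j = some k then 1 else 0 with hydef
  have hcols : ∀ k, (∑ j, y j k) = (univ.filter fun j => σ j = some k).card := by
    intro k
    rw [Finset.card_eq_sum_ones, Finset.sum_filter]
  have hy1 : ∀ (j : Fin n), ∀ k ∈ B, y j k ≤ 1 := by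
    intro j k _
    rw [hydef]
    dsimp only
    split
    · exact le_refl 1
    · exact Nat.zero_le 1
  have hrow : ∀ j, ∑ k ∈ B, y j k ≤ 1 := by
    intro j
    cases hσj : σ j with
    | none =>
      have : ∀ k ∈ B, y j k = 0 := by
        intro k _
        rw [hydef]
        dsimp only
        rw [if_neg (by rw [hσj]; exact fun h => by cases h)]
      rw [Finset.sum_congr rfl this, Finset.sum_const_zero]
      exact Nat.zero_le 1
    | some k₀ =>
      have e : ∀ k ∈ B, y j k = if k₀ = k then 1 else 0 := by
        intro k _
        rw [hydef]
        dsimp only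
        rw [hσj]
        by_cases h : k₀ = k
        · rw [if_pos h, if_pos (by rw [h])]
        · rw [if_neg h, if_neg (fun he => h (Option.some_inj.mp he))]
      rw [Finset.sum_congr rfl e, Finset.sum_ite_eq B k₀ (fun _ => 1)]
      split
      · exact le_refl 1
      · exact Nat.zero_le 1
  have hcolbounds : ∀ k ∈ B, l k ≤ ∑ j, y j k ∧ ∑ j, y j k ≤ u k := by
    intro k hk
    obtain ⟨h1, h2⟩ := hσcount k hk
    rw [hcols k]
    constructor
    · refine le_trans ?_ h1
      split
      · exact hlu k hk
      · exact le_refl _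
    · refine le_trans h2 ?_
      split
      · exact hlu k hk
      · exact le_refl _
  have hinner : ∀ (j : Fin n) (φ : ℤ → ℝ), (∑ k ∈ B, φ k * (y j k : ℝ))
      = (σ j).elim 0 φ := by
    intro j φ
    cases hσj : σ j with
    | none =>
      have e : ∀ k ∈ B, φ k * (y j k : ℝ) = 0 := by
        intro k _
        rw [hydef]
        dsimp only
        rw [if_neg (by rw [hσj]; exact fun h => by cases h)]
        norm_num
      rw [Finset.sum_congr rfl e, Finset.sum_const_zero]
      rfl
    | some k₀ =>
      have hk₀B : k₀ ∈ B := hNfB j (hσN j k₀ hσj)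
      have e : ∀ k ∈ B, φ k * (y j k : ℝ) = if k₀ = k then φ k else 0 := by
        intro k _
        rw [hydef]
        dsimp only
        rw [hσj]
        by_cases h : k₀ = k
        · rw [if_pos h, if_pos (by rw [h])]
          norm_num
        · rw [if_neg h, if_neg (fun he => h (Option.some_inj.mp he))]
          norm_num
      rw [Finset.sum_congr rfl e, Finset.sum_ite_eq B k₀ φ, if_pos hk₀B]
      rfl
  refine ⟨gs, y, hy1, hcolbounds, hrow, ?_⟩
  unfold FD
  have hval1 : ∑ j, ∑ k ∈ B, c j k * (y j k : ℝ) = ∑ j, (σ j).elim 0 (c j) :=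
    Finset.sum_congr rfl fun j _ => hinner j (c j)
  have hcolval : ∑ k ∈ B, ((u k:ℝ) * max (gs k) 0 + (l k:ℝ) * min (gs k) 0)
      = ∑ j, (σ j).elim 0 gs := by
    have e1 : ∀ k ∈ B, (u k:ℝ) * max (gs k) 0 + (l k:ℝ) * min (gs k) 0
        = ∑ j, gs k * (y j k : ℝ) := by
      intro k hk
      obtain ⟨h1, h2⟩ := hσcount k hk
      have hsum : ∑ j, gs k * (y j k : ℝ) = ((∑ j, y j k : ℕ) : ℝ) * gs k := by
        rw [Nat.cast_sum, Finset.sum_mul]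
        exact Finset.sum_congr rfl fun j _ => by ring
      rw [hsum]
      rcases lt_trichotomy (gs k) 0 with hneg | h0 | hpos
      · have hm : (∑ j, y j k) = l k := by
          rw [hcols k]
          rw [if_pos hneg] at h2
          rw [if_neg (not_lt.mpr (le_of_lt hneg))] at h1
          omega
        rw [hm, max_eq_right (le_of_lt hneg), min_eq_left (le_of_lt hneg)]
        ring
      · rw [h0, max_eq_right (le_refl (0:ℝ)), min_eq_left (le_refl (0:ℝ))]
        ring
      · have hm : (∑ j, y j k) = u k := by
          rw [hcols k]
          rw [if_neg (not_lt.mpr (le_of_lt hpos))] at h2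
          rw [if_pos hpos] at h1
          omega
        rw [hm, max_eq_left (le_of_lt hpos), min_eq_right (le_of_lt hpos)]
        ring
    rw [Finset.sum_congr rfl e1, Finset.sum_comm]
    exact Finset.sum_congr rfl fun j _ => hinner j gs
  have hzval : ∑ j, zD n B hB c gs j = ∑ j, (σ j).elim 0 (fun k => c j k - gs k) := by
    refine Finset.sum_congr rfl fun j _ => ?_
    cases hσj : σ j with
    | none =>
      have h1 : ¬ 0 < zD n B hB c gs j := fun h => (hσP j h) hσj
      have h2 : zD n B hB c gs j = 0 := le_antisymm (not_lt.mp h1) zD_nonneg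
      rw [h2]
      rfl
    | some k₀ =>
      have hN := hσN j k₀ hσj
      have heq : c j k₀ - gs k₀ = zD n B hB c gs j := (Finset.mem_filter.mp hN).2
      rw [← heq]
      rfl
  rw [hval1, hcolval, hzval, ← Finset.sum_add_distrib]
  refine Finset.sum_congr rfl fun j _ => ?_
  cases hσj : σ j with
  | none => simp [Option.elim]
  | some k₀ => simp [Option.elim]

set_option maxHeartbeats 1000000 in
theorem stmt_6 (n : ℕ) (hn : 0 < n) (Km Kp : ℤ) (hKm : Km < 0) (hKp : 0 < Kp)
    (a : Fin n → ℝ) (b : ℝ)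
    (d : Fin n → ℤ → ℝ) (hd0 : ∀ j : Fin n, d j 0 = 0)
    (l u : ℤ → ℕ)
    (hlu : ∀ k ∈ bands Km Kp, l k ≤ u k)
    (hun : ∀ k ∈ bands Km Kp, u k ≤ n)
    (hu0 : u 0 = n)
    (hl : ∑ k ∈ bands Km Kp, l k ≤ n)
    (x : Fin n → ℝ) (hx : ∀ j, 0 ≤ x j) :
    (∑ j : Fin n, a j * x j + DEV n Km Kp l u d x ≤ b) ↔
    (∃ (v w : ℤ → ℝ) (z : Fin n → ℝ),
      (∀ k ∈ bands Km Kp, 0 ≤ v k) ∧ (∀ k ∈ bands Km Kp, 0 ≤ w k) ∧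
      (∀ j : Fin n, 0 ≤ z j) ∧
      (∀ j : Fin n, ∀ k ∈ bands Km Kp, d j k * x j ≤ -v k + w k + z j) ∧
      ∑ j : Fin n, a j * x j - (∑ k ∈ bands Km Kp, (l k : ℝ) * v k)
        + (∑ k ∈ bands Km Kp, (u k : ℝ) * w k) + ∑ j : Fin n, z j ≤ b) := by
  classical
  have h0B : (0:ℤ) ∈ bands Km Kp := by
    rw [bands, Finset.mem_Icc]
    omega
  have hB : (bands Km Kp).Nonempty := ⟨0, h0B⟩
  set c : Fin n → ℤ → ℝ := fun j k => d j k * x j with hcdef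
  set Sset : Set ℝ := {v | ∃ y : Fin n → ℤ → ℕ, memY n Km Kp l u y ∧
    v = ∑ j : Fin n, ∑ k ∈ bands Km Kp, d j k * x j * (y j k : ℝ)} with hSdef
  have hDEV : DEV n Km Kp l u d x = sSup Sset := rfl
  -- boundedness
  have hbdd : BddAbove Sset := by
    refine ⟨∑ j, ∑ k ∈ bands Km Kp, |c j k|, ?_⟩
    rintro v ⟨y, ⟨hy1, hy2, hy3⟩, rfl⟩
    refine Finset.sum_le_sum fun j _ => Finset.sum_le_sum fun k hk => ?_
    have h1 : (y j k : ℝ) ≤ 1 := by exact_mod_cast hy1 j k hk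
    have h0 : (0:ℝ) ≤ (y j k : ℝ) := Nat.cast_nonneg _
    calc d j k * x j * (y j k:ℝ) ≤ |d j k * x j * (y j k:ℝ)| := le_abs_self _
      _ = |c j k| * (y j k:ℝ) := by rw [abs_mul, abs_of_nonneg h0]
      _ ≤ |c j k| * 1 := mul_le_mul_of_nonneg_left h1 (abs_nonneg _)
      _ = |c j k| := mul_one _
  -- nonemptiness via a feasible y
  have hSne : Sset.Nonempty := by
    set pre : ℤ → ℕ := fun k => ∑ k' ∈ (bands Km Kp).filter (· < k), l k' with hpredef
    have hpresum : ∀ k ∈ bands Km Kp, pre k + l k = ∑ k' ∈ (bands Km Kp).filter (· ≤ k), l k' := by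
      intro k hk
      have he : (bands Km Kp).filter (· ≤ k) = insert k ((bands Km Kp).filter (· < k)) := by
        ext k'
        simp only [Finset.mem_filter, Finset.mem_insert]
        constructor
        · rintro ⟨h1, h2⟩
          rcases eq_or_lt_of_le h2 with h | h
          · exact Or.inl h
          · exact Or.inr ⟨h1, h⟩
        · rintro (rfl | ⟨h1, h2⟩)
          · exact ⟨hk, le_refl _⟩
          · exact ⟨h1, le_of_lt h2⟩
      rw [he, Finset.sum_insert (by simp only [Finset.mem_filter]; exact fun h => lt_irrefl k h.2)]
      rw [hpredef]
      exact Nat.add_comm _ _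
    have hprele : ∀ k ∈ bands Km Kp, pre k + l k ≤ n := by
      intro k hk
      rw [hpresum k hk]
      exact le_trans (Finset.sum_le_sum_of_subset (Finset.filter_subset _ _)) hl
    have hmono : ∀ p q : ℤ, p ∈ bands Km Kp → p < q → pre p + l p ≤ pre q := by
      intro p q hp hpq
      rw [hpresum p hp, hpredef]
      refine Finset.sum_le_sum_of_subset ?_
      intro k' hk'
      rw [Finset.mem_filter] at hk' ⊢
      exact ⟨hk'.1, lt_of_le_of_lt hk'.2 hpq⟩
    set y0 : Fin n → ℤ → ℕ := fun j k =>
      if k ∈ bands Km Kp ∧ pre k ≤ (j:ℕ) ∧ (j:ℕ) < pre k + l k then 1 else 0 with hy0def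
    have hcol0 : ∀ k ∈ bands Km Kp, ∑ j, y0 j k = l k := by
      intro k hk
      have e : ∀ j : Fin n, y0 j k = if pre k ≤ (j:ℕ) ∧ (j:ℕ) < pre k + l k then 1 else 0 := by
        intro j
        rw [hy0def]
        dsimp only
        by_cases h : pre k ≤ (j:ℕ) ∧ (j:ℕ) < pre k + l k
        · rw [if_pos ⟨hk, h⟩, if_pos h]
        · rw [if_neg (fun hh => h hh.2), if_neg h]
      rw [Finset.sum_congr rfl (fun j _ => e j), ← Finset.sum_filter,
        ← Finset.card_eq_sum_ones]
      have hcard : (univ.filter fun j : Fin n => pre k ≤ (j:ℕ) ∧ (j:ℕ) < pre k + l k).card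
          = (Finset.Ico (pre k) (pre k + l k)).card := by
        refine Finset.card_bij' (fun j _ => (j : ℕ))
          (fun m hm => (⟨m, lt_of_lt_of_le (Finset.mem_Ico.mp hm).2 (hprele k hk)⟩ : Fin n))
          ?_ ?_ ?_ ?_
        · intro j hj
          rw [Finset.mem_filter] at hj
          rw [Finset.mem_Ico]
          exact hj.2
        · intro m hm
          rw [Finset.mem_filter]
          rw [Finset.mem_Ico] at hm
          exact ⟨Finset.mem_univ _, hm⟩
        · intro j hj
          exact Fin.ext rfl
        · intro m hm
          rfl
      rw [hcard, Nat.card_Ico]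
      omega
    have hrow0 : ∀ j, ∑ k ∈ bands Km Kp, y0 j k ≤ 1 := by
      intro j
      have e : ∑ k ∈ bands Km Kp, y0 j k =
          ((bands Km Kp).filter fun k => pre k ≤ (j:ℕ) ∧ (j:ℕ) < pre k + l k).card := by
        rw [Finset.card_eq_sum_ones, Finset.sum_filter]
        refine Finset.sum_congr rfl fun k hk => ?_
        rw [hy0def]
        dsimp only
        by_cases h : pre k ≤ (j:ℕ) ∧ (j:ℕ) < pre k + l k
        · rw [if_pos ⟨hk, h⟩, if_pos h]
        · rw [if_neg (fun hh => h hh.2), if_neg h]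
      rw [e]
      refine Finset.card_le_one.mpr ?_
      intro k1 hk1 k2 hk2
      rw [Finset.mem_filter] at hk1 hk2
      by_contra hne
      rcases lt_trichotomy k1 k2 with h | h | h
      · have := hmono k1 k2 hk1.1 h
        omega
      · exact hne h
      · have := hmono k2 k1 hk2.1 h
        omega
    refine ⟨_, ⟨y0, ⟨?_, ?_, hrow0⟩, rfl⟩⟩
    · intro j k _
      rw [hy0def]
      dsimp only
      split
      · exact le_refl 1
      · exact Nat.zero_le 1
    · intro k hk
      rw [hcol0 k hk]
      exact ⟨le_refl _, hlu k hk⟩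
  constructor
  · -- forward direction
    intro hrc
    obtain ⟨g, y, hy1, hy2, hy3, hval⟩ := exists_dual_pair n (bands Km Kp) hB c l u hlu hl
    have hmem : (∑ j, ∑ k ∈ bands Km Kp, c j k * (y j k:ℝ)) ∈ Sset := by
      refine ⟨y, ⟨hy1, hy2, hy3⟩, ?_⟩
      rfl
    have hle : FD n (bands Km Kp) hB c l u g ≤ sSup Sset := by
      rw [← hval]
      exact le_csSup hbdd hmem
    refine ⟨fun k => max (-g k) 0, fun k => max (g k) 0, fun j => zD n (bands Km Kp) hB c g j,
      fun k _ => le_max_right _ _, fun k _ => le_max_right _ _, fun j => zD_nonneg, ?_, ?_⟩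
    · intro j k hk
      have h1 : c j k - g k ≤ zD n (bands Km Kp) hB c g j := zD_ge hk
      have h2 : -max (-g k) 0 + max (g k) 0 = g k := by
        rcases le_total (g k) 0 with h | h
        · rw [max_eq_left (by linarith : (0:ℝ) ≤ -g k), max_eq_right h]
          ring
        · rw [max_eq_right (by linarith : -g k ≤ (0:ℝ)), max_eq_left h]
          ring
      rw [hcdef] at h1
      dsimp only at h1
      linarith
    · have heq : - (∑ k ∈ bands Km Kp, (l k:ℝ) * max (-g k) 0)
          + (∑ k ∈ bands Km Kp, (u k:ℝ) * max (g k) 0)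
          + ∑ j, zD n (bands Km Kp) hB c g j = FD n (bands Km Kp) hB c l u g := by
        unfold FD
        have e1 : ∑ k ∈ bands Km Kp, ((u k : ℝ) * max (g k) 0 + (l k : ℝ) * min (g k) 0)
            = (∑ k ∈ bands Km Kp, (u k : ℝ) * max (g k) 0)
              + ∑ k ∈ bands Km Kp, (l k : ℝ) * min (g k) 0 := Finset.sum_add_distrib
        have e2 : ∑ k ∈ bands Km Kp, (l k:ℝ) * min (g k) 0
            = - ∑ k ∈ bands Km Kp, (l k:ℝ) * max (-g k) 0 := by
          rw [← Finset.sum_neg_distrib]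
          refine Finset.sum_congr rfl fun k _ => ?_
          rcases le_total (g k) 0 with h | h
          · rw [min_eq_left h, max_eq_left (by linarith : (0:ℝ) ≤ -g k)]
            ring
          · rw [min_eq_right h, max_eq_right (by linarith : -g k ≤ (0:ℝ))]
            ring
        rw [e1, e2]
        ring
      have hfd := le_trans hle (by rw [hDEV] at hrc; linarith : sSup Sset ≤ b - ∑ j, a j * x j)
      linarith [heq, hfd]
  · -- backward direction: weak duality
    rintro ⟨v, w, z, hv, hw, hz, hcon, hfin⟩
    have hQ : sSup Sset ≤ - (∑ k ∈ bands Km Kp, (l k:ℝ) * v k)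
        + (∑ k ∈ bands Km Kp, (u k:ℝ) * w k) + ∑ j, z j := by
      refine csSup_le hSne ?_
      rintro v' ⟨y, ⟨hy1, hy2, hy3⟩, rfl⟩
      have step1 : ∑ j, ∑ k ∈ bands Km Kp, d j k * x j * (y j k:ℝ)
          ≤ ∑ j, ∑ k ∈ bands Km Kp, (-v k + w k + z j) * (y j k:ℝ) :=
        Finset.sum_le_sum fun j _ => Finset.sum_le_sum fun k hk =>
          mul_le_mul_of_nonneg_right (hcon j k hk) (Nat.cast_nonneg _)
      have step2 : ∑ j, ∑ k ∈ bands Km Kp, (-v k + w k + z j) * (y j k:ℝ)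
          = (∑ k ∈ bands Km Kp, (-v k) * ∑ j, (y j k:ℝ))
            + (∑ k ∈ bands Km Kp, w k * ∑ j, (y j k:ℝ))
            + ∑ j, z j * ∑ k ∈ bands Km Kp, (y j k:ℝ) := by
        have e1 : ∀ j : Fin n, ∑ k ∈ bands Km Kp, (-v k + w k + z j) * (y j k:ℝ)
            = (∑ k ∈ bands Km Kp, (-v k) * (y j k:ℝ))
              + (∑ k ∈ bands Km Kp, w k * (y j k:ℝ))
              + z j * ∑ k ∈ bands Km Kp, (y j k:ℝ) := by
          intro j
          rw [Finset.mul_sum, ← Finset.sum_add_distrib, ← Finset.sum_add_distrib]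
          refine Finset.sum_congr rfl fun k _ => ?_
          ring
        rw [Finset.sum_congr rfl fun j _ => e1 j, Finset.sum_add_distrib,
          Finset.sum_add_distrib, Finset.sum_comm (s := univ) (t := bands Km Kp),
          Finset.sum_comm (s := univ) (t := bands Km Kp)]
        congr 1
        · congr 1
          · exact Finset.sum_congr rfl fun k _ => (Finset.mul_sum _ _ _).symm
          · exact Finset.sum_congr rfl fun k _ => (Finset.mul_sum _ _ _).symm
      have step3 : (∑ k ∈ bands Km Kp, (-v k) * ∑ j, (y j k:ℝ))
            + (∑ k ∈ bands Km Kp, w k * ∑ j, (y j k:ℝ))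
            + ∑ j, z j * ∑ k ∈ bands Km Kp, (y j k:ℝ)
          ≤ - (∑ k ∈ bands Km Kp, (l k:ℝ) * v k)
            + (∑ k ∈ bands Km Kp, (u k:ℝ) * w k) + ∑ j, z j := by
        have c1 : ∑ k ∈ bands Km Kp, (-v k) * ∑ j, (y j k:ℝ)
            ≤ ∑ k ∈ bands Km Kp, (-v k) * (l k : ℝ) := by
          refine Finset.sum_le_sum fun k hk => ?_
          have hm : (l k : ℝ) ≤ ∑ j, (y j k:ℝ) := by
            have := (hy2 k hk).1
            have hc : ((∑ j, y j k : ℕ) : ℝ) = ∑ j, (y j k:ℝ) := Nat.cast_sum _ _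
            rw [← hc]
            exact_mod_cast this
          exact mul_le_mul_of_nonpos_left hm (by linarith [hv k hk])
        have c2 : ∑ k ∈ bands Km Kp, w k * ∑ j, (y j k:ℝ)
            ≤ ∑ k ∈ bands Km Kp, w k * (u k : ℝ) := by
          refine Finset.sum_le_sum fun k hk => ?_
          have hm : ∑ j, (y j k:ℝ) ≤ (u k : ℝ) := by
            have := (hy2 k hk).2
            have hc : ((∑ j, y j k : ℕ) : ℝ) = ∑ j, (y j k:ℝ) := Nat.cast_sum _ _
            rw [← hc]
            exact_mod_cast this
          exact mul_le_mul_of_nonneg_left hm (hw k hk)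
        have c3 : ∑ j, z j * ∑ k ∈ bands Km Kp, (y j k:ℝ) ≤ ∑ j, z j := by
          refine Finset.sum_le_sum fun j _ => ?_
          have hm : ∑ k ∈ bands Km Kp, (y j k:ℝ) ≤ 1 := by
            have := hy3 j
            have hc : ((∑ k ∈ bands Km Kp, y j k : ℕ) : ℝ) = ∑ k ∈ bands Km Kp, (y j k:ℝ) :=
              Nat.cast_sum _ _
            rw [← hc]
            exact_mod_cast this
          calc z j * ∑ k ∈ bands Km Kp, (y j k:ℝ) ≤ z j * 1 :=
              mul_le_mul_of_nonneg_left hm (hz j)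
            _ = z j := mul_one _
        have c4 : ∑ k ∈ bands Km Kp, (-v k) * (l k : ℝ)
            = - ∑ k ∈ bands Km Kp, (l k:ℝ) * v k := by
          rw [← Finset.sum_neg_distrib]
          exact Finset.sum_congr rfl fun k _ => by ring
        have c5 : ∑ k ∈ bands Km Kp, w k * (u k : ℝ)
            = ∑ k ∈ bands Km Kp, (u k:ℝ) * w k :=
          Finset.sum_congr rfl fun k _ => by ring
        rw [c4] at c1
        rw [c5] at c2
        linarith
      exact le_trans step1 (le_trans (le_of_eq step2) step3)
    rw [hDEV]
    linarith
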